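/- For each i ∈ [n], the set S_i = {f ∈ S : f restricts to the identity on X \ X_i and maps X_i into X_i} is a submonoid of S = E(X,P) isomorphic to E(X_i, P_i), the idempotent-generated submonoid of T(X_i, P_i), where X_i is the union of all blocks of size i and P_i the induced partition. -/

import Mathlib

/-- The semigroup of transformations of `X = Σ q, Fin (n q)` preserving the partition
into the blocks `C_q = {q} × [n_q]`, as a submonoid of the full transformation monoid. -/
def TXP (m : ℕ) (n : Fin m → ℕ) : Submonoid (Function.End (Σ q : Fin m, Fin (n q))) where
  carrier := {f | ∀ q : Fin m, ∃ r : Fin m, ∀ x : Σ q : Fin m, Fin (n q), x.1 = q → (f x).1 = r}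
  one_mem' := fun q => ⟨q, fun _ hx => hx⟩
  mul_mem' := by
    intro a b ha hb q
    obtain ⟨r, hr⟩ := hb q
    obtain ⟨s, hs⟩ := ha r
    exact ⟨s, fun x hx => hs _ (hr x hx)⟩

/-- The submonoid of `T(X,P)` generated by its idempotents. -/
def EXP (m : ℕ) (n : Fin m → ℕ) : Submonoid (Function.End (Σ q : Fin m, Fin (n q))) :=
  Submonoid.closure {f | f ∈ TXP m n ∧ f * f = f}

/-- The transformation monoid of `X_i = ⋃_{q ∈ M_i} C_q` (blocks of size `i`) preserving the
induced uniform partition `P_i`, where `X_i` is modelled as `{q // n q = i} × Fin i`. -/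
def TXPi (m : ℕ) (n : Fin m → ℕ) (i : ℕ) :
    Submonoid (Function.End ({q : Fin m // n q = i} × Fin i)) where
  carrier := {f | ∀ q, ∃ r, ∀ x : {q : Fin m // n q = i} × Fin i, x.1 = q → (f x).1 = r}
  one_mem' := fun q => ⟨q, fun _ hx => hx⟩
  mul_mem' := by
    intro a b ha hb q
    obtain ⟨r, hr⟩ := hb q
    obtain ⟨s, hs⟩ := ha r
    exact ⟨s, fun x hx => hs _ (hr x hx)⟩

/-- `E(X_i,P_i)`: the idempotent-generated submonoid of `T(X_i,P_i)`. -/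
def EXPi (m : ℕ) (n : Fin m → ℕ) (i : ℕ) :
    Submonoid (Function.End ({q : Fin m // n q = i} × Fin i)) :=
  Submonoid.closure {f | f ∈ TXPi m n i ∧ f * f = f}

/-- `S_i = {f ∈ S : f|_{X \ X_i} = id, X_i f ⊆ X_i}`, where `X_i` is the union of the blocks
of size `i`. -/
def SiSet (m : ℕ) (n : Fin m → ℕ) (i : ℕ) : Set (Function.End (Σ q : Fin m, Fin (n q))) :=
  {f | f ∈ EXP m n ∧ (∀ x : Σ q : Fin m, Fin (n q), n x.1 ≠ i → f x = x) ∧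
    (∀ x : Σ q : Fin m, Fin (n q), n x.1 = i → n (f x).1 = i)}

namespace SiProof


variable {F : Type*} [Fintype F] [DecidableEq F]

/-- idempotent-generated submonoid of `Function.End F` -/
def MF (F : Type*) : Submonoid (Function.End F) :=
  Submonoid.closure {e | e * e = e}

/-- the map sending `z` to `w`, fixing everything else -/
def sg (z w : F) : Function.End F := fun x => if x = z then w else x

lemma sg_apply_self (z w : F) : sg z w z = w := by simp [sg]

lemma sg_apply_of_ne (z w : F) {x : F} (h : x ≠ z) : sg z w x = x := by
  simp only [sg]; rw [if_neg h]

lemma sg_idem {z w : F} (h : w ≠ z) : (sg z w) * (sg z w) = sg z w := by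
  funext x
  show sg z w (sg z w x) = sg z w x
  by_cases hx : x = z
  · subst hx; rw [sg_apply_self, sg_apply_of_ne _ _ h]
  · rw [sg_apply_of_ne _ _ hx, sg_apply_of_ne _ _ hx]

lemma sg_mem_MF {z w : F} (h : w ≠ z) : sg z w ∈ MF F :=
  Submonoid.subset_closure (sg_idem h)

instance decPredMoved (f : Function.End F) : DecidablePred fun x : F => f x ≠ x :=
  fun _ => inferInstance

/-- number of moved points -/
def mv (f : Function.End F) : ℕ := (Finset.univ.filter (fun x => f x ≠ x)).card

lemma mv_eq_zero {f : Function.End F} (h : mv f = 0) : f = 1 := by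
  funext x
  show f x = x
  by_contra hx
  have : x ∈ Finset.univ.filter (fun x => f x ≠ x) := by simp [hx]
  rw [Finset.card_eq_zero.mp h] at this
  simp at this

lemma injective_idem_eq_one {f : Function.End F} (hf : f * f = f)
    (hinj : Function.Injective f) : f = 1 := by
  funext x
  exact hinj (congrFun hf x)

/-- Permutation-with-a-hole lemma: if `π` is injective fixing `z`, then `π ∘ (z ⇝ y₀)`
is a product of idempotents. -/
lemma perm_hole : ∀ (k : ℕ) (π : Function.End F), mv π ≤ k → Function.Injective π →
    ∀ z y₀ : F, π z = z → y₀ ≠ z → π * sg z y₀ ∈ MF F := by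
  intro k
  induction k with
  | zero =>
    intro π hk hinj z y₀ hz hy
    have : π = 1 := mv_eq_zero (Nat.le_zero.mp hk)
    subst this
    rw [one_mul]
    exact sg_mem_MF hy
  | succ k ih =>
    intro π hk hinj z y₀ hz hy
    by_cases hπ : π = 1
    · subst hπ; rw [one_mul]; exact sg_mem_MF hy
    · -- pick a moved point
      have : ∃ a, π a ≠ a := by
        by_contra hc
        push_neg at hc
        exact hπ (funext hc)
      obtain ⟨a, ha⟩ := this
      have haz : a ≠ z := fun h => by
        apply ha; rw [h, hz]
      set b := π a with hb
      have hba : b ≠ a := ha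
      have hbz : b ≠ z := by
        intro h
        exact haz (hinj (show π a = π z by rw [← hb, h, hz]))
      set σ : Function.End F := (π ∘ ⇑(Equiv.swap a b) : F → F) with hσ
      have hσap : ∀ x, σ x = π (Equiv.swap a b x) := fun x => rfl
      have hσinj : Function.Injective σ := hinj.comp (Equiv.injective _)
      have hσz : σ z = z := by
        rw [hσap, Equiv.swap_apply_of_ne_of_ne (Ne.symm haz) (Ne.symm hbz), hz]
      have hσb : σ b = b := by
        rw [hσap, Equiv.swap_apply_right, hb]
      have hσmv : mv σ ≤ k := by
        have hsub : (Finset.univ.filter (fun x => σ x ≠ x)) ⊆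
            (Finset.univ.filter (fun x => π x ≠ x)).erase b := by
          intro x hx
          simp only [Finset.mem_filter, Finset.mem_univ, true_and] at hx
          rcases eq_or_ne x b with rfl | hxb
          · exact absurd hσb hx
          · refine Finset.mem_erase.mpr ⟨hxb, ?_⟩
            simp only [Finset.mem_filter, Finset.mem_univ, true_and]
            rcases eq_or_ne x a with rfl | hxa
            · exact ha
            · intro hpx
              apply hx
              rw [hσap, Equiv.swap_apply_of_ne_of_ne hxa hxb, hpx]
        have hbmem : b ∈ Finset.univ.filter (fun x => π x ≠ x) := by
          simp only [Finset.mem_filter, Finset.mem_univ, true_and]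
          intro h
          exact hba (hinj (show π b = π a by rw [h, hb]))
        have h1 : mv σ ≤ (Finset.univ.filter (fun x => π x ≠ x)).card - 1 := by
          calc mv σ ≤ ((Finset.univ.filter (fun x => π x ≠ x)).erase b).card :=
                Finset.card_le_card hsub
            _ = _ := Finset.card_erase_of_mem hbmem
        have h2 : (Finset.univ.filter (fun x => π x ≠ x)).card ≤ k + 1 := hk
        omega
      -- the gadget G
      set G : Function.End F := (sg z b) * (sg b a) * (sg a z) * (sg z y₀) with hG
      have hGap : ∀ x, G x = Equiv.swap a b (sg z y₀ x) := by
        intro x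
        show sg z b (sg b a (sg a z (sg z y₀ x))) = _
        by_cases hxz : x = z
        · subst hxz
          rw [sg_apply_self]
          rcases eq_or_ne y₀ a with hya | hya
          · rw [hya, sg_apply_self, sg_apply_of_ne _ _ (Ne.symm hbz),
              sg_apply_self, Equiv.swap_apply_left]
          · rcases eq_or_ne y₀ b with hyb | hyb
            · rw [hyb, sg_apply_of_ne _ _ hba, sg_apply_self,
                sg_apply_of_ne _ _ haz, Equiv.swap_apply_right]
            · rw [sg_apply_of_ne _ _ hya, sg_apply_of_ne _ _ hyb,
                sg_apply_of_ne _ _ hy, Equiv.swap_apply_of_ne_of_ne hya hyb]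
        · rw [sg_apply_of_ne _ _ hxz]
          rcases eq_or_ne x a with hxa | hxa
          · rw [hxa, sg_apply_self, sg_apply_of_ne _ _ (Ne.symm hbz), sg_apply_self,
              Equiv.swap_apply_left]
          · rcases eq_or_ne x b with hxb | hxb
            · rw [hxb, sg_apply_of_ne _ _ hba, sg_apply_self,
                sg_apply_of_ne _ _ haz, Equiv.swap_apply_right]
            · rw [sg_apply_of_ne _ _ hxa, sg_apply_of_ne _ _ hxb,
                sg_apply_of_ne _ _ hxz, Equiv.swap_apply_of_ne_of_ne hxa hxb]
      have hGnz : ∀ x, G x ≠ z := by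
        intro x h
        rw [hGap] at h
        have : sg z y₀ x = z := by
          have := congrArg (⇑(Equiv.swap a b)) h
          rw [Equiv.swap_apply_self, Equiv.swap_apply_of_ne_of_ne (Ne.symm haz) (Ne.symm hbz)]
            at this
          exact this
        by_cases hxz : x = z
        · subst hxz; rw [sg_apply_self] at this; exact hy this
        · rw [sg_apply_of_ne _ _ hxz] at this; exact hxz this
      have hkey : π * sg z y₀ = (σ * sg z y₀) * G := by
        funext x
        show π (sg z y₀ x) = σ (sg z y₀ (G x))
        rw [sg_apply_of_ne _ _ (hGnz x), hσap, hGap, Equiv.swap_apply_self]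
      rw [hkey]
      refine mul_mem (ih σ hσmv hσinj z y₀ hσz hy) ?_
      rw [hG]
      exact mul_mem (mul_mem (mul_mem (sg_mem_MF hbz) (sg_mem_MF (Ne.symm hba)))
        (sg_mem_MF (Ne.symm haz))) (sg_mem_MF hy)

/-- Howie's theorem: every non-injective endomap of a finite type is a
product of idempotents. -/
theorem howie_aux : ∀ (k : ℕ) (α : Function.End F), mv α ≤ k →
    ¬ Function.Injective α → α ∈ MF F := by
  intro k
  induction k with
  | zero =>
    intro α hk hinj
    exact absurd (mv_eq_zero (Nat.le_zero.mp hk) ▸ Function.injective_id) hinj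
  | succ k ih =>
    intro α hk hninj
    have hnsurj : ¬ Function.Surjective α := fun h =>
      hninj (Finite.injective_iff_surjective.mpr h)
    have hex : ∃ z, ∀ x, α x ≠ z := by
      unfold Function.Surjective at hnsurj
      push_neg at hnsurj
      obtain ⟨z, hz⟩ := hnsurj
      exact ⟨z, fun x h => hz x h⟩
    obtain ⟨z, hz⟩ := hex
    have hαz : α z ≠ z := fun h => hz z h
    set α' : Function.End F := Function.update α z z with hα'
    have hα'z : α' z = z := Function.update_self z z α
    have hα'ne : ∀ x, x ≠ z → α' x = α x := fun x hx => Function.update_of_ne hx z α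
    have hmv : mv α' ≤ k := by
      have hsub : (Finset.univ.filter (fun x => α' x ≠ x)) ⊆
          (Finset.univ.filter (fun x => α x ≠ x)).erase z := by
        intro x hx
        simp only [Finset.mem_filter, Finset.mem_univ, true_and] at hx
        rcases eq_or_ne x z with rfl | hxz
        · exact absurd hα'z hx
        · refine Finset.mem_erase.mpr ⟨hxz, ?_⟩
          simp only [Finset.mem_filter, Finset.mem_univ, true_and]
          rwa [hα'ne x hxz] at hx
      have hzmem : z ∈ Finset.univ.filter (fun x => α x ≠ x) := by
        simp only [Finset.mem_filter, Finset.mem_univ, true_and]; exact hαz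
      have h1 := Finset.card_le_card hsub
      rw [Finset.card_erase_of_mem hzmem] at h1
      have h2 : (Finset.univ.filter (fun x => α x ≠ x)).card ≤ k + 1 := hk
      unfold mv
      omega
    by_cases hinj' : Function.Injective α'
    · -- permutation-with-hole case
      have hsurj' : Function.Surjective α' := Finite.injective_iff_surjective.mp hinj'
      obtain ⟨y₀, hy₀⟩ := hsurj' (α z)
      have hy₀z : y₀ ≠ z := by
        intro h
        rw [h, hα'z] at hy₀
        exact hαz hy₀.symm
      have : α = α' * sg z y₀ := by
        funext x
        show α x = α' (sg z y₀ x)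
        by_cases hxz : x = z
        · subst hxz; rw [sg_apply_self, hy₀]
        · rw [sg_apply_of_ne _ _ hxz, hα'ne x hxz]
      rw [this]
      exact perm_hole k α' hmv hinj' z y₀ hα'z hy₀z
    · -- recurse
      have : α = sg z (α z) * α' := by
        funext x
        show α x = sg z (α z) (α' x)
        by_cases hxz : x = z
        · subst hxz; rw [hα'z, sg_apply_self]
        · rw [hα'ne x hxz, sg_apply_of_ne _ _ (fun h => hz x h)]
      rw [this]
      exact mul_mem (sg_mem_MF hαz) (ih α' hmv hinj')

theorem howie {α : Function.End F} (h : ¬ Function.Injective α) : α ∈ MF F :=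
  howie_aux (mv α) α le_rfl h

section Blocks
variable {J : Type*} [Fintype J] [DecidableEq J]

/-- block-preserving property -/
def bp (f : Function.End (J × F)) : Prop :=
  ∀ j, ∃ r, ∀ p : J × F, p.1 = j → (f p).1 = r

/-- idempotent-generated submonoid of block-preserving maps -/
def MB (J F : Type*) : Submonoid (Function.End (J × F)) :=
  Submonoid.closure {f | bp f ∧ f * f = f}

/-- map with block map τ and within-block maps G -/
def TT (τ : J → J) (G : J → Function.End F) : Function.End (J × F) :=
  fun p => (τ p.1, G p.1 p.2)

lemma TT_apply (τ : J → J) (G : J → Function.End F) (p : J × F) :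
    TT τ G p = (τ p.1, G p.1 p.2) := rfl

/-- idempotent moving block `c` to block `d` via `w`, fixing everything else -/
def Emv (c d : J) (w : Function.End F) : Function.End (J × F) :=
  fun p => if p.1 = c then (d, w p.2) else p

lemma Emv_apply_fst (c d : J) (w : Function.End F) (p : J × F) (h : p.1 = c) :
    Emv c d w p = (d, w p.2) := by simp only [Emv, if_pos h]

lemma Emv_apply_snd (c d : J) (w : Function.End F) (p : J × F) (h : p.1 ≠ c) :
    Emv c d w p = p := by simp only [Emv, if_neg h]

lemma Emv_bp (c d : J) (w : Function.End F) : bp (Emv c d w) := by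
  intro j
  by_cases hj : j = c
  · exact ⟨d, fun p hp => by rw [Emv_apply_fst c d w p (hp.trans hj)]⟩
  · exact ⟨j, fun p hp => by rw [Emv_apply_snd c d w p (by rw [hp]; exact hj)]; exact hp⟩

lemma Emv_idem {c d : J} (h : d ≠ c) (w : Function.End F) :
    Emv c d w * Emv c d w = Emv c d w := by
  funext p
  show Emv c d w (Emv c d w p) = Emv c d w p
  by_cases hp : p.1 = c
  · rw [Emv_apply_fst c d w p hp, Emv_apply_snd]; exact h
  · rw [Emv_apply_snd c d w p hp, Emv_apply_snd c d w p hp]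

lemma Emv_mem_MB {c d : J} (h : d ≠ c) (w : Function.End F) : Emv c d w ∈ MB J F :=
  Submonoid.subset_closure ⟨Emv_bp c d w, Emv_idem h w⟩

/-- in-place application of `w` on block `j₀` -/
def InP (j₀ : J) (w : Function.End F) : Function.End (J × F) :=
  fun p => if p.1 = j₀ then (j₀, w p.2) else p

lemma InP_apply_fst (j₀ : J) (w : Function.End F) (p : J × F) (h : p.1 = j₀) :
    InP j₀ w p = (j₀, w p.2) := by simp only [InP, if_pos h]

lemma InP_apply_snd (j₀ : J) (w : Function.End F) (p : J × F) (h : p.1 ≠ j₀) :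
    InP j₀ w p = p := by simp only [InP, if_neg h]

lemma InP_one (j₀ : J) : InP j₀ (1 : Function.End F) = 1 := by
  funext p
  show InP j₀ 1 p = p
  by_cases hp : p.1 = j₀
  · rw [InP_apply_fst j₀ 1 p hp]
    exact Prod.ext hp.symm rfl
  · rw [InP_apply_snd j₀ 1 p hp]

lemma InP_mul (j₀ : J) (u v : Function.End F) :
    InP j₀ (u * v) = InP j₀ u * InP j₀ v := by
  funext p
  show InP j₀ (u * v) p = InP j₀ u (InP j₀ v p)
  by_cases hp : p.1 = j₀
  · rw [InP_apply_fst j₀ (u*v) p hp, InP_apply_fst j₀ v p hp,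
      InP_apply_fst j₀ u _ rfl]
    rfl
  · rw [InP_apply_snd j₀ _ p hp, InP_apply_snd j₀ v p hp, InP_apply_snd j₀ u p hp]

lemma InP_bp (j₀ : J) (w : Function.End F) : bp (InP j₀ w) := by
  intro j
  by_cases hj : j = j₀
  · exact ⟨j₀, fun p hp => by rw [InP_apply_fst j₀ w p (hp.trans hj)]⟩
  · exact ⟨j, fun p hp => by rw [InP_apply_snd j₀ w p (by rw [hp]; exact hj)]; exact hp⟩

lemma InP_mem_MB (j₀ : J) {w : Function.End F} (hw : w ∈ MF F) : InP j₀ w ∈ MB J F := by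
  induction hw using Submonoid.closure_induction with
  | mem e he =>
    refine Submonoid.subset_closure ⟨InP_bp j₀ e, ?_⟩
    rw [← InP_mul, he]
  | one => rw [InP_one]; exact one_mem _
  | mul u v _ _ hu hv => rw [InP_mul]; exact mul_mem hu hv

/-- in-place maps over a finite set of blocks -/
lemma S1_aux (G : J → Function.End F) (hG : ∀ j, G j ∈ MF F) (s : Finset J) :
    ∃ V ∈ MB J F, ∀ p : J × F, V p = (p.1, if p.1 ∈ s then G p.1 p.2 else p.2) := by
  induction s using Finset.induction_on with
  | empty => exact ⟨1, one_mem _, fun p => by show p = _; simp⟩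
  | @insert j s hjs ih =>
    obtain ⟨V', hV', hspec⟩ := ih
    refine ⟨V' * InP j (G j), mul_mem hV' (InP_mem_MB j (hG j)), fun p => ?_⟩
    show V' (InP j (G j) p) = _
    by_cases hp : p.1 = j
    · rw [InP_apply_fst j (G j) p hp, hspec]
      simp only [if_neg hjs, hp, Finset.mem_insert, true_or, if_pos]
    · rw [InP_apply_snd j (G j) p hp, hspec]
      have : p.1 ∈ insert j s ↔ p.1 ∈ s := by
        simp [Finset.mem_insert, hp]
      by_cases hps : p.1 ∈ s
      · rw [if_pos hps, if_pos (this.mpr hps)]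
      · rw [if_neg hps, if_neg (fun hm => hps (this.mp hm))]

/-- block-identity maps with idempotent-generated within maps are in MB -/
lemma S1 (G : J → Function.End F) (hG : ∀ j, G j ∈ MF F) :
    TT (fun j => j) G ∈ MB J F := by
  obtain ⟨V, hV, hspec⟩ := S1_aux G hG Finset.univ
  have : V = TT (fun j => j) G := by
    funext p
    rw [hspec, TT_apply, if_pos (Finset.mem_univ _)]
  rwa [this] at hV

/-- gadget phase: in-place within maps through a hole `z` -/
lemma PBfin (z : J) (W : J → Function.End F) : ∀ (s : Finset J), z ∉ s →
    ∃ V ∈ MB J F, ∀ p : J × F, p.1 ≠ z →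
      V p = (p.1, if p.1 ∈ s then W p.1 p.2 else p.2) := by
  intro s
  induction s using Finset.induction_on with
  | empty => exact fun _ => ⟨1, one_mem _, fun p _ => by show p = _; simp⟩
  | @insert j s hjs ih =>
    intro hz
    have hzs : z ∉ s := fun h => hz (Finset.mem_insert_of_mem h)
    have hjz : j ≠ z := fun h => hz (h ▸ Finset.mem_insert_self j s)
    obtain ⟨V', hV', hspec⟩ := ih hzs
    refine ⟨V' * (Emv z j 1 * Emv j z (W j)),
      mul_mem hV' (mul_mem (Emv_mem_MB hjz 1) (Emv_mem_MB (Ne.symm hjz) (W j))), fun p hp => ?_⟩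
    show V' (Emv z j 1 (Emv j z (W j) p)) = _
    by_cases hpj : p.1 = j
    · rw [Emv_apply_fst j z (W j) p hpj, Emv_apply_fst z j 1 _ rfl]
      rw [hspec _ hjz]
      simp only [if_neg hjs, if_pos (show (j:J) ∈ insert j s from Finset.mem_insert_self j s), hpj]
      rfl
    · rw [Emv_apply_snd j z (W j) p hpj, Emv_apply_snd z j 1 p hp, hspec p hp]
      have hiff : p.1 ∈ insert j s ↔ p.1 ∈ s := by simp [Finset.mem_insert, hpj]
      by_cases hps : p.1 ∈ s
      · rw [if_pos hps, if_pos (hiff.mpr hps)]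
      · rw [if_neg hps, if_neg (fun hm => hps (hiff.mp hm))]

/-- realizing a block permutation with arbitrary within maps, off a hole `z` -/
lemma PB : ∀ (k : ℕ) (π : J → J), mv (π : Function.End J) ≤ k → Function.Injective π →
    ∀ z : J, π z = z → ∀ W : J → Function.End F,
    ∃ V ∈ MB J F, ∀ p : J × F, p.1 ≠ z → V p = (π p.1, W p.1 p.2) := by
  intro k
  induction k with
  | zero =>
    intro π hk hinj z hz W
    have hπ1 : ∀ x, π x = x := fun x => congrFun (mv_eq_zero (Nat.le_zero.mp hk)) x
    obtain ⟨V, hV, hspec⟩ := PBfin z W (Finset.univ.erase z) (by simp)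
    refine ⟨V, hV, fun p hp => ?_⟩
    rw [hspec p hp, if_pos (Finset.mem_erase.mpr ⟨hp, Finset.mem_univ _⟩), hπ1]
  | succ k ih =>
    intro π hk hinj z hz W
    by_cases hπ : ∀ x, π x = x
    · obtain ⟨V, hV, hspec⟩ := PBfin z W (Finset.univ.erase z) (by simp)
      refine ⟨V, hV, fun p hp => ?_⟩
      rw [hspec p hp, if_pos (Finset.mem_erase.mpr ⟨hp, Finset.mem_univ _⟩), hπ]
    · push_neg at hπ
      obtain ⟨a, ha⟩ := hπ
      have haz : a ≠ z := fun h => by apply ha; rw [h, hz]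
      set b := π a with hb
      have hba : b ≠ a := ha
      have hbz : b ≠ z := fun h =>
        haz (hinj (show π a = π z by rw [← hb, h, hz]))
      set σ : J → J := (π ∘ ⇑(Equiv.swap a b) : J → J) with hσ
      have hσap : ∀ x, σ x = π (Equiv.swap a b x) := fun x => rfl
      have hσinj : Function.Injective σ := hinj.comp (Equiv.injective _)
      have hσz : σ z = z := by
        rw [hσap, Equiv.swap_apply_of_ne_of_ne (Ne.symm haz) (Ne.symm hbz), hz]
      have hσb : σ b = b := by rw [hσap, Equiv.swap_apply_right, hb]
      have hσa : σ a = π b := by rw [hσap, Equiv.swap_apply_left]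
      have hσmv : mv (σ : Function.End J) ≤ k := by
        have hsub : (Finset.univ.filter (fun x => σ x ≠ x)) ⊆
            (Finset.univ.filter (fun x => π x ≠ x)).erase b := by
          intro x hx
          simp only [Finset.mem_filter, Finset.mem_univ, true_and] at hx
          rcases eq_or_ne x b with rfl | hxb
          · exact absurd hσb hx
          · refine Finset.mem_erase.mpr ⟨hxb, ?_⟩
            simp only [Finset.mem_filter, Finset.mem_univ, true_and]
            rcases eq_or_ne x a with rfl | hxa
            · exact ha
            · intro hpx
              apply hx
              rw [hσap, Equiv.swap_apply_of_ne_of_ne hxa hxb, hpx]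
        have hbmem : b ∈ Finset.univ.filter (fun x => π x ≠ x) := by
          simp only [Finset.mem_filter, Finset.mem_univ, true_and]
          intro h
          exact hba (hinj (show π b = π a by rw [h, hb]))
        have h1 := Finset.card_le_card hsub
        rw [Finset.card_erase_of_mem hbmem] at h1
        have h2 : (Finset.univ.filter (fun x => π x ≠ x)).card ≤ k + 1 := hk
        unfold mv
        omega
      set W' : J → Function.End F := fun j => if j = a ∨ j = b then 1 else W j with hW'
      obtain ⟨V', hV', hspec⟩ := ih σ hσmv hσinj z hσz W'
      refine ⟨V' * (Emv z b 1 * Emv b a (W b) * Emv a z (W a)),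
        mul_mem hV' (mul_mem (mul_mem (Emv_mem_MB hbz 1) (Emv_mem_MB (Ne.symm hba) (W b)))
          (Emv_mem_MB (Ne.symm haz) (W a))), fun p hp => ?_⟩
      show V' (Emv z b 1 (Emv b a (W b) (Emv a z (W a) p))) = _
      by_cases hpa : p.1 = a
      · rw [Emv_apply_fst a z (W a) p hpa, Emv_apply_snd b a (W b) _ (Ne.symm hbz),
          Emv_apply_fst z b 1 _ rfl, hspec _ hbz]
        have : W' b = 1 := by rw [hW']; simp
        rw [hσb, this, hpa]
        rfl
      · rw [Emv_apply_snd a z (W a) p hpa]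
        by_cases hpb : p.1 = b
        · rw [Emv_apply_fst b a (W b) p hpb, Emv_apply_snd z b 1 _ haz,
            hspec _ haz]
          have : W' a = 1 := by rw [hW']; simp
          rw [hσa, this, hpb]
          rfl
        · rw [Emv_apply_snd b a (W b) p hpb, Emv_apply_snd z b 1 p hp, hspec p hp]
          have h1 : W' p.1 = W p.1 := by rw [hW']; simp [hpa, hpb]
          rw [hσap, Equiv.swap_apply_of_ne_of_ne hpa hpb, h1]

/-- Sufficiency: non-injective block map implies membership in MB -/
lemma S2 : ∀ (k : ℕ) (τ : J → J), mv (τ : Function.End J) ≤ k →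
    ¬ Function.Injective τ → ∀ G : J → Function.End F, TT τ G ∈ MB J F := by
  intro k
  induction k with
  | zero =>
    intro τ hk hninj G
    exact absurd (mv_eq_zero (Nat.le_zero.mp hk) ▸ Function.injective_id) hninj
  | succ k ih =>
    intro τ hk hninj G
    have hnsurj : ¬ Function.Surjective τ := fun h =>
      hninj (Finite.injective_iff_surjective.mpr h)
    have hex : ∃ z, ∀ x, τ x ≠ z := by
      unfold Function.Surjective at hnsurj
      push_neg at hnsurj
      obtain ⟨z, hz⟩ := hnsurj
      exact ⟨z, fun x h => hz x h⟩
    obtain ⟨z, hz⟩ := hex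
    have hτz : τ z ≠ z := hz z
    set τ' : J → J := Function.update τ z z with hτ'
    have hτ'z : τ' z = z := Function.update_self z z τ
    have hτ'ne : ∀ x, x ≠ z → τ' x = τ x := fun x hx => Function.update_of_ne hx z τ
    have hmv : mv (τ' : Function.End J) ≤ k := by
      have hsub : (Finset.univ.filter (fun x => τ' x ≠ x)) ⊆
          (Finset.univ.filter (fun x => τ x ≠ x)).erase z := by
        intro x hx
        simp only [Finset.mem_filter, Finset.mem_univ, true_and] at hx
        rcases eq_or_ne x z with rfl | hxz
        · exact absurd hτ'z hx
        · refine Finset.mem_erase.mpr ⟨hxz, ?_⟩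
          simp only [Finset.mem_filter, Finset.mem_univ, true_and]
          rwa [hτ'ne x hxz] at hx
      have hzmem : z ∈ Finset.univ.filter (fun x => τ x ≠ x) := by
        simp only [Finset.mem_filter, Finset.mem_univ, true_and]; exact hτz
      have h1 := Finset.card_le_card hsub
      rw [Finset.card_erase_of_mem hzmem] at h1
      have h2 : (Finset.univ.filter (fun x => τ x ≠ x)).card ≤ k + 1 := hk
      unfold mv
      omega
    by_cases hinj' : Function.Injective τ'
    · -- hard case: τ' is a permutation fixing z
      have hsurj' : Function.Surjective τ' := Finite.injective_iff_surjective.mp hinj'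
      obtain ⟨y₀, hy₀⟩ := hsurj' (τ z)
      have hy₀z : y₀ ≠ z := by
        intro h
        rw [h, hτ'z] at hy₀
        exact hτz hy₀.symm
      have hτ'y₀ : τ y₀ = τ z := by rw [← hy₀, hτ'ne y₀ hy₀z]
      by_cases hinjG : Function.Injective (G y₀)
      · -- G y₀ is a permutation; use its inverse
        have hsurjG : Function.Surjective (G y₀) := Finite.injective_iff_surjective.mp hinjG
        set m : Function.End F := fun x => Function.surjInv hsurjG (G z x) with hm
        have hGm : ∀ x, G y₀ (m x) = G z x := fun x => Function.surjInv_eq hsurjG (G z x)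
        obtain ⟨V, hV, hspec⟩ := PB k τ' hmv hinj' z hτ'z G
        have heq : TT τ G = V * Emv z y₀ m := by
          funext p
          show TT τ G p = V (Emv z y₀ m p)
          by_cases hp : p.1 = z
          · rw [Emv_apply_fst z y₀ m p hp, hspec _ hy₀z]
            rw [TT_apply]
            show _ = (τ' y₀, G y₀ (m p.2))
            rw [hy₀, hGm, hp]
          · rw [Emv_apply_snd z y₀ m p hp, hspec p hp, TT_apply, hτ'ne _ hp]
        rw [heq]
        exact mul_mem hV (Emv_mem_MB hy₀z m)
      · -- G y₀ is non-injective: apply it in place first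
        have hGy₀ : G y₀ ∈ MF F := howie hinjG
        set W : J → Function.End F := fun j => if j = y₀ then 1 else G j with hW
        obtain ⟨V, hV, hspec⟩ := PB k τ' hmv hinj' z hτ'z W
        have heq : TT τ G = V * Emv z y₀ (G z) * InP y₀ (G y₀) := by
          funext p
          show TT τ G p = V (Emv z y₀ (G z) (InP y₀ (G y₀) p))
          by_cases hp : p.1 = z
          · rw [InP_apply_snd y₀ (G y₀) p (by rw [hp]; exact Ne.symm hy₀z),
              Emv_apply_fst z y₀ (G z) p hp, hspec _ hy₀z, TT_apply]
            have : W y₀ = 1 := by rw [hW]; simp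
            rw [this, hy₀, hp]
            rfl
          · by_cases hpy : p.1 = y₀
            · rw [InP_apply_fst y₀ (G y₀) p hpy, Emv_apply_snd z y₀ (G z) _ hy₀z,
                hspec _ hy₀z, TT_apply]
              have : W y₀ = 1 := by rw [hW]; simp
              rw [this, hpy, hτ'ne _ hy₀z]
              rfl
            · rw [InP_apply_snd y₀ (G y₀) p hpy, Emv_apply_snd z y₀ (G z) p hp,
                hspec p hp, TT_apply, hτ'ne _ hp]
              have : W p.1 = G p.1 := by rw [hW]; simp [hpy]
              rw [this]
        rw [heq]
        exact mul_mem (mul_mem hV (Emv_mem_MB hy₀z (G z))) (InP_mem_MB y₀ hGy₀)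
    · -- easy case: peel off block z and recurse
      have heq : TT τ G = Emv z (τ z) (G z) * TT τ' (Function.update G z 1) := by
        funext p
        show TT τ G p = Emv z (τ z) (G z) (TT τ' (Function.update G z 1) p)
        by_cases hp : p.1 = z
        · rw [TT_apply, TT_apply]
          have h1 : τ' p.1 = z := by rw [hp, hτ'z]
          have h2 : Function.update G z 1 p.1 = 1 := by rw [hp]; exact Function.update_self z 1 G
          rw [Emv_apply_fst _ _ _ _ h1, hp, Function.update_self]
          rfl
        · rw [TT_apply, TT_apply, hτ'ne _ hp,
            Emv_apply_snd _ _ _ _ (show τ p.1 ≠ z from hz p.1)]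
          have h2 : Function.update G z 1 p.1 = G p.1 := Function.update_of_ne hp 1 G
          rw [h2]
      rw [heq]
      exact mul_mem (Emv_mem_MB hτz (G z)) (ih τ' hmv hinj' _)

end Blocks
section Nec
variable {m : ℕ} {n : Fin m → ℕ}

abbrev XX (m : ℕ) (n : Fin m → ℕ) := (Σ q : Fin m, Fin (n q))

/-- nonempty blocks -/
abbrev QQ (m : ℕ) (n : Fin m → ℕ) := {q : Fin m // 0 < n q}

def pt (q : QQ m n) : XX m n := ⟨q.1, ⟨0, q.2⟩⟩

/-- induced map on nonempty blocks -/
def hat (e : Function.End (XX m n)) : QQ m n → QQ m n :=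
  fun q => ⟨(e (pt q)).1, (e (pt q)).2.pos⟩

lemma hat_consistent {e : Function.End (XX m n)} (he : e ∈ TXP m n)
    (x : XX m n) (q : QQ m n) (h : x.1 = q.1) : (e x).1 = (hat e q).1 := by
  obtain ⟨r, hr⟩ := he q.1
  rw [hr x h]
  exact (hr (pt q) rfl).symm

lemma hat_mul {a b : Function.End (XX m n)} (ha : a ∈ TXP m n) :
    hat (a * b) = hat a ∘ hat b := by
  funext q
  exact Subtype.ext (hat_consistent ha (b (pt q)) (hat b q) rfl)

lemma hat_one : hat (1 : Function.End (XX m n)) = id := by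
  funext q
  exact Subtype.ext rfl

lemma prod_hat_id : ∀ L : List (Function.End (XX m n)), (∀ e ∈ L, e ∈ TXP m n) →
    (∀ e ∈ L, hat e = id) → hat L.prod = id := by
  intro L
  induction L with
  | nil => intro _ _; rw [List.prod_nil, hat_one]
  | cons e L' ih =>
    intro h1 h2
    rw [List.prod_cons, hat_mul (h1 e (List.mem_cons_self)),
      h2 e (List.mem_cons_self), ih (fun x hx => h1 x (List.mem_cons_of_mem e hx))
        (fun x hx => h2 x (List.mem_cons_of_mem e hx))]
    rfl

lemma inj_idem_id {α : Type*} {h : α → α} (hi : h ∘ h = h) (hinj : Function.Injective h) :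
    h = id := funext fun x => hinj (congrFun hi x)

lemma hats_id_of_inj : ∀ L : List (Function.End (XX m n)),
    (∀ e ∈ L, e ∈ TXP m n ∧ e * e = e) → Function.Injective (hat L.prod) →
    ∀ e ∈ L, hat e = id := by
  intro L
  induction L with
  | nil => intro _ _ e he; exact absurd he (List.not_mem_nil)
  | cons e L' ih =>
    intro hL hinj
    have heT := (hL e (List.mem_cons_self)).1
    have heI := (hL e (List.mem_cons_self)).2
    have hL' : ∀ x ∈ L', x ∈ TXP m n ∧ x * x = x :=
      fun x hx => hL x (List.mem_cons_of_mem e hx)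
    have hpT : L'.prod ∈ TXP m n :=
      Submonoid.list_prod_mem _ (fun x hx => (hL' x hx).1)
    rw [List.prod_cons, hat_mul heT] at hinj
    have hpinj : Function.Injective (hat L'.prod) := Function.Injective.of_comp hinj
    have hids := ih hL' hpinj
    have hpid : hat L'.prod = id := prod_hat_id L' (fun x hx => (hL' x hx).1) hids
    rw [hpid] at hinj
    have heinj : Function.Injective (hat e) := by
      simpa using hinj
    have heidem : hat e ∘ hat e = hat e := by
      rw [← hat_mul heT, heI]
    have heid : hat e = id := inj_idem_id heidem heinj
    intro x hx
    rcases List.mem_cons.mp hx with rfl | hx'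
    · exact heid
    · exact hids x hx'

lemma blockfix_of_hat_id {e : Function.End (XX m n)} (he : e ∈ TXP m n)
    (hid : hat e = id) : ∀ x, (e x).1 = x.1 := by
  intro x
  have := hat_consistent he x ⟨x.1, x.2.pos⟩ rfl
  rw [hid] at this
  exact this

lemma blockfix_prod : ∀ L : List (Function.End (XX m n)),
    (∀ e ∈ L, ∀ x, (e x).1 = x.1) → ∀ x, (L.prod x).1 = x.1 := by
  intro L
  induction L with
  | nil => intro _ x; rfl
  | cons e L' ih =>
    intro h x
    rw [List.prod_cons]
    show (e (L'.prod x)).1 = x.1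
    rw [h e (List.mem_cons_self) _, ih (fun y hy => h y (List.mem_cons_of_mem e hy)) x]

/-- within-block restriction -/
def rsq (f : Function.End (XX m n)) (q : Fin m) : Function.End (Fin (n q)) :=
  fun v => if h : (f ⟨q, v⟩).1 = q then h ▸ (f ⟨q, v⟩).2 else v

lemma sigma_eq_of_fst (x : XX m n) (q : Fin m) (h : x.1 = q) :
    x = ⟨q, h ▸ x.2⟩ := by
  rcases x with ⟨a, w⟩
  cases h
  rfl

lemma rsq_key {f : Function.End (XX m n)} (hf : ∀ x, (f x).1 = x.1) (q : Fin m)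
    (v : Fin (n q)) : f ⟨q, v⟩ = ⟨q, rsq f q v⟩ := by
  have h := hf ⟨q, v⟩
  unfold rsq
  rw [dif_pos h]
  exact sigma_eq_of_fst _ _ h

lemma snd_eq {q : Fin m} {x y : Fin (n q)} (h : (⟨q, x⟩ : XX m n) = ⟨q, y⟩) : x = y := by
  simpa using h

lemma rsq_one (q : Fin m) : rsq (1 : Function.End (XX m n)) q = 1 := by
  funext v
  have h := rsq_key (f := (1 : Function.End (XX m n))) (fun x => rfl) q v
  exact (snd_eq (m := m) (n := n) h).symm

lemma rsq_mul {a b : Function.End (XX m n)} (ha : ∀ x, (a x).1 = x.1)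
    (hb : ∀ x, (b x).1 = x.1) (q : Fin m) :
    rsq (a * b) q = rsq a q ∘ rsq b q := by
  have hab : ∀ x, ((a * b) x).1 = x.1 := fun x => by
    show (a (b x)).1 = x.1
    rw [ha, hb]
  funext v
  apply snd_eq (q := q)
  rw [← rsq_key hab q v]
  show a (b ⟨q, v⟩) = _
  rw [rsq_key hb q v, rsq_key ha q _]
  rfl

lemma rsq_peel : ∀ L : List (Function.End (XX m n)),
    (∀ e ∈ L, e * e = e ∧ ∀ x, (e x).1 = x.1) → ∀ q : Fin m,
    Function.Injective (rsq L.prod q) → rsq L.prod q = 1 := by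
  intro L
  induction L with
  | nil => intro _ q _; rw [List.prod_nil, rsq_one]
  | cons e L' ih =>
    intro hL q hinj
    have he := hL e (List.mem_cons_self)
    have hL' : ∀ x ∈ L', x * x = x ∧ ∀ y, (x y).1 = y.1 :=
      fun x hx => hL x (List.mem_cons_of_mem e hx)
    have hpb : ∀ x, (L'.prod x).1 = x.1 := blockfix_prod L' (fun x hx => (hL' x hx).2)
    rw [List.prod_cons, rsq_mul he.2 hpb] at hinj ⊢
    have hpinj : Function.Injective (rsq L'.prod q) := Function.Injective.of_comp hinj
    rw [ih hL' q hpinj] at hinj ⊢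
    have heinj : Function.Injective (rsq e q) := by exact hinj
    have heidem : rsq e q ∘ rsq e q = rsq e q := by
      rw [← rsq_mul he.2 he.2, he.1]
    have : rsq e q = id := inj_idem_id heidem heinj
    rw [this]
    rfl

/-- Necessity: a product of idempotents of `T(X,P)` whose action on nonempty blocks is
injective fixes all blocks, and acts on each block as the identity wherever it is
injective. -/
theorem necessity {f : Function.End (XX m n)} (hf : f ∈ EXP m n)
    (hinj : Function.Injective (hat f)) :
    (∀ x, (f x).1 = x.1) ∧ ∀ q, Function.Injective (rsq f q) → rsq f q = 1 := by
  obtain ⟨L, hL, hprod⟩ := Submonoid.exists_list_of_mem_closure hf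
  subst hprod
  have hids := hats_id_of_inj L hL hinj
  have hbf : ∀ e ∈ L, ∀ x, (e x).1 = x.1 :=
    fun e he => blockfix_of_hat_id (hL e he).1 (hids e he)
  refine ⟨blockfix_prod L hbf, fun q hq => ?_⟩
  exact rsq_peel L (fun e he => ⟨(hL e he).2, hbf e he⟩) q hq

end Nec
section Glue
variable {m : ℕ} {n : Fin m → ℕ} {i : ℕ}

abbrev JJ (m : ℕ) (n : Fin m → ℕ) (i : ℕ) := {q : Fin m // n q = i}
abbrev YY (m : ℕ) (n : Fin m → ℕ) (i : ℕ) := JJ m n i × Fin i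

def emb (p : YY m n i) : XX m n := ⟨p.1.1, Fin.cast p.1.2.symm p.2⟩

lemma n_emb_fst (p : YY m n i) : n (emb p).1 = i := p.1.2

def bar (x : XX m n) (h : n x.1 = i) : YY m n i := (⟨x.1, h⟩, Fin.cast h x.2)

lemma cast_cast {a b : ℕ} (h1 : a = b) (h2 : b = a) (x : Fin a) :
    Fin.cast h2 (Fin.cast h1 x) = x := by
  apply Fin.ext
  simp [Fin.coe_cast]

lemma fin_cast_inj {a b : ℕ} (h : a = b) : Function.Injective (Fin.cast h) := by
  intro x y hxy
  apply Fin.ext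
  have := congrArg Fin.val hxy
  simpa [Fin.coe_cast] using this

lemma bar_congr {x y : XX m n} (hxy : x = y) (hx : n x.1 = i) (hy : n y.1 = i) :
    bar x hx = bar y hy := by subst hxy; rfl

lemma bar_emb (p : YY m n i) (h : n (emb p).1 = i) : bar (emb p) h = p := by
  rcases p with ⟨⟨a, ha⟩, v⟩
  refine Prod.ext (Subtype.ext rfl) ?_
  show Fin.cast h (Fin.cast ha.symm v) = v
  exact cast_cast ha.symm h v

lemma emb_bar (x : XX m n) (h : n x.1 = i) : emb (bar x h) = x := by
  rcases x with ⟨a, w⟩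
  have h' : n a = i := h
  exact congrArg (Sigma.mk a) (cast_cast h' h'.symm w)

def phif (f : Function.End (XX m n)) : Function.End (YY m n i) :=
  fun p => if h : n (f (emb p)).1 = i then bar (f (emb p)) h else p

def psif (g : Function.End (YY m n i)) : Function.End (XX m n) :=
  fun x => if h : n x.1 = i then emb (g (bar x h)) else x

lemma phif_apply (f : Function.End (XX m n)) (p : YY m n i) (h : n (f (emb p)).1 = i) :
    phif f p = bar (f (emb p)) h := dif_pos h

lemma psif_apply_pos (g : Function.End (YY m n i)) (x : XX m n) (h : n x.1 = i) :
    psif g x = emb (g (bar x h)) := dif_pos h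

lemma psif_apply_neg (g : Function.End (YY m n i)) (x : XX m n) (h : ¬ n x.1 = i) :
    psif g x = x := dif_neg h

lemma psif_mul (g h : Function.End (YY m n i)) :
    psif (g * h) = psif g * psif h := by
  funext x
  show psif (g * h) x = psif g (psif h x)
  by_cases hx : n x.1 = i
  · rw [psif_apply_pos _ x hx, psif_apply_pos _ x hx,
      psif_apply_pos g _ (n_emb_fst _), bar_emb]
    rfl
  · rw [psif_apply_neg _ x hx, psif_apply_neg _ x hx, psif_apply_neg _ x hx]

lemma psif_one : psif (1 : Function.End (YY m n i)) = 1 := by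
  funext x
  show psif 1 x = x
  by_cases hx : n x.1 = i
  · rw [psif_apply_pos _ x hx]
    exact emb_bar x hx
  · exact psif_apply_neg _ x hx

lemma phif_psif (g : Function.End (YY m n i)) : phif (psif g) = g := by
  funext p
  show phif (psif g) p = g p
  have h1 : n (emb p).1 = i := n_emb_fst p
  have h2 : psif g (emb p) = emb (g p) := by
    rw [psif_apply_pos g _ h1, bar_emb]
  have h3 : n (psif g (emb p)).1 = i := by rw [h2]; exact n_emb_fst _
  rw [phif_apply _ p h3, bar_congr h2 h3 (n_emb_fst _), bar_emb]

lemma psif_phif {f : Function.End (XX m n)} (hf : f ∈ SiSet m n i) :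
    psif (phif f : Function.End (YY m n i)) = f := by
  obtain ⟨_, hA1, hA2⟩ := hf
  funext x
  show psif (phif f) x = f x
  by_cases hx : n x.1 = i
  · rw [psif_apply_pos _ x hx]
    have h1 : emb (bar x hx) = x := emb_bar x hx
    have h2 : n (f (emb (bar x hx))).1 = i := by rw [h1]; exact hA2 x hx
    rw [phif_apply f _ h2, emb_bar, h1]
  · rw [psif_apply_neg _ x hx, hA1 x hx]

lemma EXP_le_TXP : EXP m n ≤ TXP m n :=
  Submonoid.closure_le.mpr (fun f hf => hf.1)

lemma psif_mem_TXP {g : Function.End (YY m n i)} (hg : g ∈ TXPi m n i) :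
    psif g ∈ TXP m n := by
  have hg' : ∀ j : JJ m n i, ∃ r, ∀ p : YY m n i, p.1 = j → (g p).1 = r := hg
  intro q
  by_cases hq : n q = i
  · obtain ⟨r, hr⟩ := hg' ⟨q, hq⟩
    refine ⟨r.1, fun x hx => ?_⟩
    have hxi : n x.1 = i := by rw [hx]; exact hq
    rw [psif_apply_pos _ x hxi]
    have : (g (bar x hxi)).1 = r := hr (bar x hxi) (Subtype.ext hx)
    show (g (bar x hxi)).1.1 = r.1
    rw [this]
  · refine ⟨q, fun x hx => ?_⟩
    rw [psif_apply_neg _ x (by rw [hx]; exact hq)]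
    exact hx

lemma psif_mem_EXP {g : Function.End (YY m n i)} (hg : g ∈ EXPi m n i) :
    psif g ∈ EXP m n := by
  induction hg using Submonoid.closure_induction with
  | mem e he => exact Submonoid.subset_closure ⟨psif_mem_TXP he.1, by rw [← psif_mul, he.2]⟩
  | one => rw [psif_one]; exact one_mem _
  | mul u v _ _ hu hv => rw [psif_mul]; exact mul_mem hu hv

lemma psif_mem_SiSet {g : Function.End (YY m n i)} (hg : g ∈ EXPi m n i) :
    psif g ∈ SiSet m n i :=
  ⟨psif_mem_EXP hg, fun x hx => psif_apply_neg _ x hx,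
   fun x hx => by rw [psif_apply_pos _ x hx]; exact n_emb_fst _⟩

lemma EXPi_eq_MB : EXPi m n i = MB (JJ m n i) (Fin i) := rfl

/-- The hard direction: the restriction of an element of `S_i` to `X_i` lies in
`E(X_i, P_i)`. -/
lemma phif_mem_EXPi {f : Function.End (XX m n)} (hf : f ∈ SiSet m n i) :
    (phif f : Function.End (YY m n i)) ∈ EXPi m n i := by
  obtain ⟨hfE, hA1, hA2⟩ := hf
  rcases Nat.eq_zero_or_pos i with hi | hipos
  · subst hi
    have h1 : (phif f : Function.End (YY m n 0)) = 1 := funext fun p => p.2.elim0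
    rw [h1]
    exact one_mem _
  · have hfT : f ∈ TXP m n := EXP_le_TXP hfE
    set x0 : Fin i := ⟨0, hipos⟩ with hx0
    set g : Function.End (YY m n i) := phif f with hgdef
    have hgapply : ∀ p : YY m n i, g p = bar (f (emb p)) (hA2 _ (n_emb_fst p)) :=
      fun p => phif_apply f p _
    have hgfst : ∀ p : YY m n i, (g p).1.1 = (f (emb p)).1 := by
      intro p
      rw [hgapply p]
      rfl
    have hgsndval : ∀ p : YY m n i, ((g p).2 : ℕ) = ((f (emb p)).2 : ℕ) := by
      intro p
      rw [hgapply p]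
      simp [bar, Fin.coe_cast]
    have hgbp : bp g := by
      intro j
      obtain ⟨r, hr⟩ := hfT j.1
      have hre : (f (emb (j, x0))).1 = r := hr (emb (j, x0)) rfl
      have hnr : n r = i := by rw [← hre]; exact hA2 _ (n_emb_fst _)
      refine ⟨⟨r, hnr⟩, fun p hp => ?_⟩
      apply Subtype.ext
      rw [hgfst p]
      exact hr (emb p) (by show p.1.1 = j.1; rw [hp])
    set τ : JJ m n i → JJ m n i := fun j => (g (j, x0)).1 with hτdef
    set G : JJ m n i → Function.End (Fin i) := fun j v => (g (j, v)).2 with hGdef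
    have heq : g = TT τ G := by
      funext p
      obtain ⟨r, hr⟩ := hgbp p.1
      refine Prod.ext ?_ rfl
      show (g p).1 = (g (p.1, x0)).1
      rw [hr p rfl, hr (p.1, x0) rfl]
    by_cases hτ : Function.Injective τ
    · -- injective block action: use necessity
      have hhatq : ∀ q : QQ m n, n q.1 ≠ i → hat f q = q := by
        intro q hq
        apply Subtype.ext
        show (f (pt q)).1 = q.1
        rw [hA1 (pt q) hq]
        rfl
      have hhatT : ∀ (q : QQ m n) (hq : n q.1 = i),
          (hat f q).1 = (τ ⟨q.1, hq⟩).1 := by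
        intro q hq
        obtain ⟨r, hr⟩ := hfT q.1
        show (f (pt q)).1 = (g (⟨q.1, hq⟩, x0)).1.1
        rw [hgfst, hr (pt q) rfl, hr (emb (⟨q.1, hq⟩, x0)) rfl]
      have hhatinj : Function.Injective (hat f) := by
        intro q1 q2 hq
        by_cases h1 : n q1.1 = i <;> by_cases h2 : n q2.1 = i
        · have e1 := hhatT q1 h1
          have e2 := hhatT q2 h2
          have : τ ⟨q1.1, h1⟩ = τ ⟨q2.1, h2⟩ := by
            apply Subtype.ext
            rw [← e1, ← e2, hq]
          have h5 := hτ this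
          have hv : ((⟨q1.1, h1⟩ : JJ m n i) : Fin m) = ((⟨q2.1, h2⟩ : JJ m n i) : Fin m) :=
            congrArg Subtype.val h5
          exact Subtype.ext hv
        · exfalso
          apply h2
          have hn1 : n (hat f q1).1 = i := by
            rw [hhatT q1 h1]
            exact (τ ⟨q1.1, h1⟩).2
          rw [hq, hhatq q2 h2] at hn1
          exact absurd hn1 h2
        · exfalso
          apply h1
          have hn2 : n (hat f q2).1 = i := by
            rw [hhatT q2 h2]
            exact (τ ⟨q2.1, h2⟩).2
          rw [← hq, hhatq q1 h1] at hn2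
          exact absurd hn2 h1
        · rw [← hhatq q1 h1, ← hhatq q2 h2, hq]
      obtain ⟨hC1, hC2⟩ := necessity hfE hhatinj
      have hτid : τ = fun j => j := by
        funext j
        apply Subtype.ext
        show (g (j, x0)).1.1 = j.1
        rw [hgfst]
        exact hC1 (emb (j, x0))
      -- within-block maps
      have hGval : ∀ (j : JJ m n i) (v : Fin i),
          ((G j v : Fin i) : ℕ) = ((rsq f j.1 (Fin.cast j.2.symm v) : Fin (n j.1)) : ℕ) := by
        intro j v
        have hkey := rsq_key hC1 j.1 (Fin.cast j.2.symm v)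
        have : emb (j, v) = ⟨j.1, Fin.cast j.2.symm v⟩ := rfl
        have hval := congrArg (fun s : XX m n => (s.2 : ℕ)) hkey
        show ((g (j, v)).2 : ℕ) = _
        rw [hgsndval (j, v), this]
        exact hval
      have hG : ∀ j, G j ∈ MF (Fin i) := by
        intro j
        by_cases hGj : Function.Injective (G j)
        · -- then rsq f j.1 is injective, hence identity, hence G j = 1
          have hrinj : Function.Injective (rsq f j.1) := by
            intro a b hab
            have h1 : ((G j (Fin.cast j.2 a) : Fin i) : ℕ) = ((G j (Fin.cast j.2 b) : Fin i) : ℕ) := by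
              rw [hGval j (Fin.cast j.2 a), hGval j (Fin.cast j.2 b),
                cast_cast j.2 j.2.symm a, cast_cast j.2 j.2.symm b, hab]
            have h2 : G j (Fin.cast j.2 a) = G j (Fin.cast j.2 b) := Fin.ext h1
            have h3 := hGj h2
            have h4 := congrArg Fin.val h3
            simp only [Fin.coe_cast] at h4
            exact Fin.ext h4
          have hrid := hC2 j.1 hrinj
          have : G j = 1 := by
            funext v
            apply Fin.ext
            rw [hGval j v, hrid]
            show ((Fin.cast j.2.symm v : Fin (n j.1)) : ℕ) = (v : ℕ)
            simp [Fin.coe_cast]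
          rw [this]
          exact one_mem _
        · exact howie hGj
      rw [heq, hτid, EXPi_eq_MB]
      exact S1 G hG
    · rw [heq, EXPi_eq_MB]
      exact S2 (mv (τ : Function.End (JJ m n i))) τ le_rfl hτ G

end Glue

lemma SiSet_one (m : ℕ) (n : Fin m → ℕ) (i : ℕ) :
    (1 : Function.End (Σ q : Fin m, Fin (n q))) ∈ SiSet m n i :=
  ⟨one_mem _, fun _ _ => rfl, fun _ hx => hx⟩

lemma SiSet_mul {m : ℕ} {n : Fin m → ℕ} {i : ℕ}
    {a b : Function.End (Σ q : Fin m, Fin (n q))}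
    (ha : a ∈ SiSet m n i) (hb : b ∈ SiSet m n i) : a * b ∈ SiSet m n i :=
  ⟨mul_mem ha.1 hb.1,
    fun x hx => by show a (b x) = x; rw [hb.2.1 x hx, ha.2.1 x hx],
    fun x hx => ha.2.2 _ (hb.2.2 x hx)⟩

end SiProof

/-- For each `i`, `S_i` is a submonoid of `S = E(X,P)` isomorphic (as a monoid) to
`E(X_i, P_i)`. -/
theorem Si_submonoid_iso_EXPi (m : ℕ) (n : Fin m → ℕ) (i : ℕ) :
    ((1 : Function.End (Σ q : Fin m, Fin (n q))) ∈ SiSet m n i ∧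
      ∀ a ∈ SiSet m n i, ∀ b ∈ SiSet m n i, a * b ∈ SiSet m n i) ∧
    ∃ φ : Function.End (Σ q : Fin m, Fin (n q)) →
        Function.End ({q : Fin m // n q = i} × Fin i),
      Set.BijOn φ (SiSet m n i) (EXPi m n i : Set _) ∧
      (∀ a ∈ SiSet m n i, ∀ b ∈ SiSet m n i, φ (a * b) = φ a * φ b) ∧
      φ 1 = 1 := by
  refine ⟨⟨SiProof.SiSet_one m n i, fun a ha b hb => SiProof.SiSet_mul ha hb⟩,
    SiProof.phif, ⟨fun f hf => SiProof.phif_mem_EXPi hf, ?_, ?_⟩, ?_, ?_⟩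
  · intro a ha b hb hab
    rw [← SiProof.psif_phif ha, ← SiProof.psif_phif hb, hab]
  · intro g hg
    exact ⟨SiProof.psif g, SiProof.psif_mem_SiSet hg, SiProof.phif_psif g⟩
  · intro a ha b hb
    have h1 : a * b = SiProof.psif (SiProof.phif (i := i) a * SiProof.phif (i := i) b) := by
      rw [SiProof.psif_mul, SiProof.psif_phif ha, SiProof.psif_phif hb]
    rw [h1, SiProof.phif_psif]
  · rw [← SiProof.psif_one, SiProof.phif_psif]
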